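/- (Zero duality gap.) Let W ∈ Sⁿ and let F = {X ⪰ 0 : A(X) = b} be nonempty. Then the optimal value p* = min{½‖X − W‖² : X ∈ F} of the best approximation problem equals the optimal value d* of its Lagrangian dual: p* = d* = sup{ φ(y,Z) : y ∈ ℝᵐ, Z ∈ Sⁿ₊ }, where φ(y,Z) = −½‖Z + A*(y)‖² + ⟨y, b − A(W)⟩ − ⟨Z, W⟩. -/

import Mathlib

open Matrix Set

noncomputable section

/-- Squared Frobenius norm via the trace inner product. -/
def frobSq {k : ℕ} (M : Matrix (Fin k) (Fin k) ℝ) : ℝ := (Mᵀ * M).trace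

/-- The linear map `A X = (⟨Aᵢ, X⟩)ᵢ` (trace inner product). -/
def calA {n m : ℕ} (A : Fin m → Matrix (Fin n) (Fin n) ℝ)
    (X : Matrix (Fin n) (Fin n) ℝ) : Fin m → ℝ := fun i => (A i * X).trace

/-- The adjoint map `A* λ = ∑ᵢ λᵢ Aᵢ`. -/
def adjA {n m : ℕ} (A : Fin m → Matrix (Fin n) (Fin n) ℝ) (lam : Fin m → ℝ) :
    Matrix (Fin n) (Fin n) ℝ := ∑ i, lam i • A i

/-- The spectrahedron `F = {X ⪰ 0 : A X = b}`. -/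
def spectra {n m : ℕ} (A : Fin m → Matrix (Fin n) (Fin n) ℝ) (b : Fin m → ℝ) :
    Set (Matrix (Fin n) (Fin n) ℝ) := {X | X.PosSemidef ∧ calA A X = b}

/-- The dual functional `φ(y,Z) = −½‖Z + A*y‖² + ⟨y, b − A(W)⟩ − ⟨Z, W⟩`. -/
def dualPhi {n m : ℕ} (A : Fin m → Matrix (Fin n) (Fin n) ℝ) (b : Fin m → ℝ)
    (W : Matrix (Fin n) (Fin n) ℝ) (y : Fin m → ℝ) (Z : Matrix (Fin n) (Fin n) ℝ) : ℝ :=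
  -(1 / 2) * frobSq (Z + adjA A y) + (∑ i, y i * (b i - calA A W i)) - (Z * W).trace

namespace Stmt7Aux

variable {n m : ℕ}

/-! ### Trace inner product basics -/

/-- trace inner product, as an explicit sum. -/
def tdot (M N : Matrix (Fin n) (Fin n) ℝ) : ℝ := ∑ i, ∑ j, M i j * N i j

lemma tdot_comm (M N : Matrix (Fin n) (Fin n) ℝ) : tdot M N = tdot N M := by
  unfold tdot; simp_rw [mul_comm]

lemma trace_mul_eq_tdot (M N : Matrix (Fin n) (Fin n) ℝ) :
    (M * N).trace = tdot Mᵀ N := by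
  unfold tdot
  rw [Matrix.trace]
  simp only [Matrix.diag, Matrix.mul_apply]
  rw [Finset.sum_comm]
  simp only [transpose_apply]

lemma trace_mul_symm_eq_tdot {M : Matrix (Fin n) (Fin n) ℝ} (hM : M.IsSymm)
    (N : Matrix (Fin n) (Fin n) ℝ) : (M * N).trace = tdot M N := by
  rw [trace_mul_eq_tdot, hM]

lemma frobSq_eq_tdot (M : Matrix (Fin n) (Fin n) ℝ) : frobSq M = tdot M M := by
  unfold frobSq
  rw [trace_mul_eq_tdot]
  unfold tdot
  simp

lemma tdot_self_nonneg (M : Matrix (Fin n) (Fin n) ℝ) : 0 ≤ tdot M M := by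
  apply Finset.sum_nonneg; intro i _; apply Finset.sum_nonneg; intro j _; exact mul_self_nonneg _

lemma tdot_add_left (M N P : Matrix (Fin n) (Fin n) ℝ) :
    tdot (M + N) P = tdot M P + tdot N P := by
  unfold tdot; simp [add_mul, Finset.sum_add_distrib]

lemma tdot_add_right (M N P : Matrix (Fin n) (Fin n) ℝ) :
    tdot M (N + P) = tdot M N + tdot M P := by
  unfold tdot; simp [mul_add, Finset.sum_add_distrib]

lemma tdot_sub_left (M N P : Matrix (Fin n) (Fin n) ℝ) :
    tdot (M - N) P = tdot M P - tdot N P := by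
  unfold tdot; simp [sub_mul, Finset.sum_sub_distrib]

lemma tdot_sub_right (M N P : Matrix (Fin n) (Fin n) ℝ) :
    tdot M (N - P) = tdot M N - tdot M P := by
  unfold tdot; simp [mul_sub, Finset.sum_sub_distrib]

lemma tdot_smul_left (c : ℝ) (M P : Matrix (Fin n) (Fin n) ℝ) :
    tdot (c • M) P = c * tdot M P := by
  unfold tdot; simp [Finset.mul_sum, mul_assoc]

lemma tdot_smul_right (c : ℝ) (M P : Matrix (Fin n) (Fin n) ℝ) :
    tdot M (c • P) = c * tdot M P := by
  rw [tdot_comm, tdot_smul_left, tdot_comm]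

lemma tdot_zero_left (P : Matrix (Fin n) (Fin n) ℝ) : tdot 0 P = 0 := by
  unfold tdot; simp

lemma tdot_zero_right (P : Matrix (Fin n) (Fin n) ℝ) : tdot P 0 = 0 := by
  unfold tdot; simp

lemma tdot_sum_left {s : Finset (Fin m)} (f : Fin m → Matrix (Fin n) (Fin n) ℝ)
    (P : Matrix (Fin n) (Fin n) ℝ) :
    tdot (∑ i ∈ s, f i) P = ∑ i ∈ s, tdot (f i) P := by
  classical
  induction s using Finset.induction with
  | empty => simp [tdot_zero_left]
  | insert _ _ h ih => rw [Finset.sum_insert h, tdot_add_left, ih, Finset.sum_insert h]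

lemma tdot_adjA (A : Fin m → Matrix (Fin n) (Fin n) ℝ) (y : Fin m → ℝ)
    (P : Matrix (Fin n) (Fin n) ℝ) :
    tdot (adjA A y) P = ∑ i, y i * tdot (A i) P := by
  unfold adjA
  rw [tdot_sum_left]
  congr 1; ext i; rw [tdot_smul_left]

lemma calA_eq_tdot {A : Fin m → Matrix (Fin n) (Fin n) ℝ} (hA : ∀ i, (A i).IsSymm)
    (X : Matrix (Fin n) (Fin n) ℝ) (i : Fin m) : calA A X i = tdot (A i) X :=
  trace_mul_symm_eq_tdot (hA i) X

/-! ### PSD basics -/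

lemma isSymm_of_posSemidef {M : Matrix (Fin n) (Fin n) ℝ} (h : M.PosSemidef) : M.IsSymm := by
  have := h.1
  rwa [Matrix.IsHermitian, conjTranspose_eq_transpose_of_trivial] at this

lemma posSemidef_def {M : Matrix (Fin n) (Fin n) ℝ} :
    M.PosSemidef ↔ M.IsSymm ∧ ∀ x : Fin n → ℝ, 0 ≤ x ⬝ᵥ (M *ᵥ x) := by
  constructor
  · intro h
    refine ⟨isSymm_of_posSemidef h, fun x => ?_⟩
    have := h.dotProduct_mulVec_nonneg x
    simpa using this
  · rintro ⟨h1, h2⟩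
    refine .of_dotProduct_mulVec_nonneg ?_ fun x => by simpa using h2 x
    rw [Matrix.IsHermitian, conjTranspose_eq_transpose_of_trivial]
    exact h1

lemma posSemidef_add {M N : Matrix (Fin n) (Fin n) ℝ} (hM : M.PosSemidef) (hN : N.PosSemidef) :
    (M + N).PosSemidef := by
  rw [posSemidef_def] at *
  refine ⟨hM.1.add hN.1, fun x => ?_⟩
  rw [add_mulVec, dotProduct_add]
  exact add_nonneg (hM.2 x) (hN.2 x)

lemma posSemidef_smul {M : Matrix (Fin n) (Fin n) ℝ} (hM : M.PosSemidef) {c : ℝ} (hc : 0 ≤ c) :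
    (c • M).PosSemidef := by
  rw [posSemidef_def] at *
  refine ⟨?_, fun x => ?_⟩
  · unfold Matrix.IsSymm at *
    rw [transpose_smul, hM.1]
  · rw [smul_mulVec, dotProduct_smul, smul_eq_mul]
    exact mul_nonneg hc (hM.2 x)

lemma posSemidef_vecMulVec (v : Fin n → ℝ) : (vecMulVec v v).PosSemidef := by
  rw [posSemidef_def]
  constructor
  · unfold Matrix.IsSymm
    ext i j
    simp [vecMulVec, mul_comm]
  · intro x
    have : x ⬝ᵥ (vecMulVec v v *ᵥ x) = (v ⬝ᵥ x) * (v ⬝ᵥ x) := by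
      simp [dotProduct, vecMulVec, mulVec, Finset.sum_mul, Finset.mul_sum]
      congr 1; ext i; congr 1; ext j; ring
    rw [this]
    exact mul_self_nonneg _

lemma tdot_vecMulVec (M : Matrix (Fin n) (Fin n) ℝ) (v : Fin n → ℝ) :
    tdot M (vecMulVec v v) = v ⬝ᵥ (M *ᵥ v) := by
  unfold tdot
  simp [dotProduct, vecMulVec, mulVec, Finset.mul_sum]
  congr 1; ext i; congr 1; ext j; ring

open scoped MatrixOrder in
/-- trace inner product of two psd matrices is nonneg -/
lemma tdot_nonneg_of_posSemidef {M N : Matrix (Fin n) (Fin n) ℝ}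
    (hM : M.PosSemidef) (hN : N.PosSemidef) : 0 ≤ tdot M N := by
  have hsym := isSymm_of_posSemidef hN
  have hMN : tdot M N = (M * N).trace := by
    unfold tdot
    rw [Matrix.trace]
    simp only [Matrix.diag, Matrix.mul_apply]
    refine Finset.sum_congr rfl fun i _ => Finset.sum_congr rfl fun j _ => ?_
    have hN2 : N i j = N j i := by
      calc N i j = Nᵀ j i := rfl
      _ = N j i := by rw [hsym]
    rw [hN2, mul_comm]
  rw [hMN]
  set S := CFC.sqrt N with hS
  have hNS : N = S * S := (CFC.sqrt_mul_sqrt_self N hN.nonneg).symm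
  have h1 : (M * N).trace = (S * M * S).trace := by
    rw [hNS, ← Matrix.mul_assoc, Matrix.trace_mul_comm (M * S) S, ← Matrix.mul_assoc]
  rw [h1]
  have hpsd : (S * M * Sᴴ).PosSemidef := hM.mul_mul_conjTranspose_same S
  rw [(CFC.sqrt_nonneg N).posSemidef.1] at hpsd
  rw [Matrix.trace]
  apply Finset.sum_nonneg
  intro i _
  have := hpsd.dotProduct_mulVec_nonneg (Pi.single i 1)
  simpa [Matrix.diag] using this

/-! ### Linearity of calA and adjA -/

lemma calA_add (A : Fin m → Matrix (Fin n) (Fin n) ℝ) (M N : Matrix (Fin n) (Fin n) ℝ) :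
    calA A (M + N) = calA A M + calA A N := by
  funext i
  simp [calA, Matrix.mul_add]

lemma calA_smul (A : Fin m → Matrix (Fin n) (Fin n) ℝ) (c : ℝ) (M : Matrix (Fin n) (Fin n) ℝ) :
    calA A (c • M) = c • calA A M := by
  funext i
  simp [calA, Matrix.mul_smul]

lemma adjA_add (A : Fin m → Matrix (Fin n) (Fin n) ℝ) (y z : Fin m → ℝ) :
    adjA A (y + z) = adjA A y + adjA A z := by
  unfold adjA
  rw [← Finset.sum_add_distrib]
  congr 1; funext i; rw [Pi.add_apply, add_smul]

lemma adjA_smul (A : Fin m → Matrix (Fin n) (Fin n) ℝ) (c : ℝ) (y : Fin m → ℝ) :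
    adjA A (c • y) = c • adjA A y := by
  unfold adjA
  rw [Finset.smul_sum]
  congr 1; funext i; rw [Pi.smul_apply, smul_smul, smul_eq_mul]

lemma adjA_isSymm {A : Fin m → Matrix (Fin n) (Fin n) ℝ} (hA : ∀ i, (A i).IsSymm)
    (y : Fin m → ℝ) : (adjA A y).IsSymm := by
  unfold Matrix.IsSymm adjA
  rw [transpose_sum]
  congr 1; funext i
  rw [transpose_smul, hA i]

/-! ### Weak duality -/

lemma weak_duality {A : Fin m → Matrix (Fin n) (Fin n) ℝ} (hA : ∀ i, (A i).IsSymm)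
    {b : Fin m → ℝ} {W : Matrix (Fin n) (Fin n) ℝ} (hW : W.IsSymm)
    {X : Matrix (Fin n) (Fin n) ℝ} (hX : X ∈ spectra A b)
    (y : Fin m → ℝ) {Z : Matrix (Fin n) (Fin n) ℝ} (hZ : Z.PosSemidef) :
    dualPhi A b W y Z ≤ (1 / 2) * frobSq (X - W) := by
  obtain ⟨hXpsd, hXfeas⟩ := hX
  have hZsym := isSymm_of_posSemidef hZ
  set S := Z + adjA A y with hSdef
  set D := X - W with hD
  -- rewrite dualPhi
  have hsum : (∑ i, y i * (b i - calA A W i)) = tdot (adjA A y) D := by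
    rw [tdot_adjA]
    refine Finset.sum_congr rfl fun i _ => ?_
    rw [← hXfeas]
    rw [calA_eq_tdot hA, calA_eq_tdot hA, hD, tdot_sub_right]
  have hPhi : dualPhi A b W y Z
      = -(1/2) * tdot S S + tdot (adjA A y) D + tdot Z D - tdot Z X := by
    unfold dualPhi
    rw [hsum, frobSq_eq_tdot, trace_mul_symm_eq_tdot hZsym]
    have : tdot Z W = tdot Z X - tdot Z D := by
      rw [hD, tdot_sub_right]; ring
    rw [this]; ring
  have e1 : tdot (D - S) (D - S) = tdot D D - tdot D S - tdot S D + tdot S S := by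
    simp only [tdot_sub_left, tdot_sub_right]; ring
  have e2 : tdot S D = tdot Z D + tdot (adjA A y) D := by
    rw [hSdef, tdot_add_left]
  have e3 : tdot D S = tdot S D := tdot_comm D S
  rw [hPhi, frobSq_eq_tdot]
  have h1 : 0 ≤ tdot (D - S) (D - S) := tdot_self_nonneg (D - S)
  have h2 : 0 ≤ tdot Z X := tdot_nonneg_of_posSemidef hZ hXpsd
  linarith

/-! ### Vectorization -/

/-- view a matrix as an element of `Fin n × Fin n → ℝ` -/
def toV (M : Matrix (Fin n) (Fin n) ℝ) : Fin n × Fin n → ℝ := fun p => M p.1 p.2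

lemma toV_add (M N : Matrix (Fin n) (Fin n) ℝ) : toV (M + N) = toV M + toV N := rfl

lemma toV_smul (c : ℝ) (M : Matrix (Fin n) (Fin n) ℝ) : toV (c • M) = c • toV M := rfl

lemma sum_toV_mul (M N : Matrix (Fin n) (Fin n) ℝ) :
    ∑ p : Fin n × Fin n, toV M p * toV N p = tdot M N := by
  rw [Fintype.sum_prod_type]
  rfl

/-- every vector is a combination of the standard basis -/
lemma pi_eq_sum_single (v : Fin n × Fin n → ℝ) :
    v = ∑ p : Fin n × Fin n, v p • (Pi.single p 1 : Fin n × Fin n → ℝ) := by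
  calc v = ∑ p : Fin n × Fin n, (Pi.single p (v p) : Fin n × Fin n → ℝ) :=
        (Finset.univ_sum_single v).symm
  _ = ∑ p : Fin n × Fin n, v p • (Pi.single p 1 : Fin n × Fin n → ℝ) := by
    refine Finset.sum_congr rfl fun p _ => ?_
    funext q
    by_cases h : q = p <;> simp [Pi.single_apply, h]

end Stmt7Aux

open Stmt7Aux

/-- zero duality gap: the optimal value `p*` of the best approximation
problem equals `d* = sup{φ(y,Z) : y ∈ ℝᵐ, Z ⪰ 0}`. -/
theorem stmt7 {n m : ℕ} (A : Fin m → Matrix (Fin n) (Fin n) ℝ)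
    (hA : ∀ i, (A i).IsSymm) (hLI : LinearIndependent ℝ A) (b : Fin m → ℝ)
    (hFne : (spectra A b).Nonempty)
    (W : Matrix (Fin n) (Fin n) ℝ) (hW : W.IsSymm)
    (pstar : ℝ)
    (hp : IsLeast {v : ℝ | ∃ X ∈ spectra A b, v = (1 / 2) * frobSq (X - W)} pstar) :
    IsLUB {v : ℝ | ∃ (y : Fin m → ℝ) (Z : Matrix (Fin n) (Fin n) ℝ),
        Z.PosSemidef ∧ v = dualPhi A b W y Z} pstar := by
  obtain ⟨⟨Xb, hXbMem, hpeq⟩, hlb⟩ := hp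
  constructor
  · -- upper bound: weak duality
    rintro v ⟨y, Z, hZ, rfl⟩
    rw [hpeq]
    exact weak_duality hA hW hXbMem y hZ
  · -- least upper bound: strong duality
    intro u hu
    -- variational inequality for the minimizer Xb
    have hVI : ∀ X ∈ spectra A b, 0 ≤ tdot (Xb - W) (X - Xb) := by
      intro X hX
      set Lam := Xb - W with hLam
      set D := X - Xb with hDdef
      by_contra hneg
      push_neg at hneg
      set a := tdot Lam D with ha
      set c := tdot D D with hc
      have hc0 : 0 ≤ c := tdot_self_nonneg D
      -- for every θ ∈ (0,1], 0 ≤ 2θa + θ²c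
      have hkey : ∀ θ : ℝ, 0 < θ → θ ≤ 1 → 0 ≤ 2 * θ * a + θ^2 * c := by
        intro θ hθ0 hθ1
        have hXmem : Xb + θ • D ∈ spectra A b := by
          have hrep : Xb + θ • D = (1 - θ) • Xb + θ • X := by
            rw [hDdef, smul_sub, sub_smul, one_smul]
            abel
          constructor
          · rw [hrep]
            exact posSemidef_add (posSemidef_smul hXbMem.1 (by linarith))
              (posSemidef_smul hX.1 hθ0.le)
          · rw [hrep, calA_add, calA_smul, calA_smul, hXbMem.2, hX.2]
            funext i
            simp only [Pi.add_apply, Pi.smul_apply, smul_eq_mul]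
            ring
        have hle : pstar ≤ (1/2) * frobSq (Xb + θ • D - W) :=
          hlb ⟨Xb + θ • D, hXmem, rfl⟩
        have hexp : frobSq (Xb + θ • D - W) = tdot Lam Lam + 2 * θ * a + θ^2 * c := by
          have hrw : Xb + θ • D - W = Lam + θ • D := by rw [hLam]; abel
          rw [hrw, frobSq_eq_tdot]
          simp only [tdot_add_left, tdot_add_right, tdot_smul_left, tdot_smul_right]
          rw [tdot_comm D Lam, ha, hc]
          ring
        rw [hpeq] at hle
        rw [hexp] at hle
        rw [frobSq_eq_tdot] at hle
        linarith
      -- derive contradiction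
      have hθ0 : (0:ℝ) < min 1 (-a / (c + 1)) := by
        apply lt_min one_pos
        apply div_pos (by linarith) (by linarith)
      set θ := min 1 (-a / (c + 1)) with hθdef
      have h1 : θ ≤ 1 := min_le_left _ _
      have h2 : θ ≤ -a / (c + 1) := min_le_right _ _
      have h3 : θ * (c + 1) ≤ -a :=
        (le_div_iff₀ (by linarith : (0:ℝ) < c + 1)).mp h2
      have h4 := hkey θ hθ0 h1
      nlinarith [mul_le_mul_of_nonneg_left h3 hθ0.le, mul_pos hθ0 hθ0, sq_nonneg θ]
    set Lam := Xb - W with hLamdef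
    have hLamSymm : Lam.IsSymm := by
      unfold Matrix.IsSymm at *
      rw [hLamdef, transpose_sub, hW, isSymm_of_posSemidef hXbMem.1]
    -- the dual cone in vectorized form
    set C : Set ((Fin n × Fin n → ℝ) × ℝ) :=
      {e | ∃ (y : Fin m → ℝ) (Z : Matrix (Fin n) (Fin n) ℝ) (t : ℝ), Z.PosSemidef ∧ 0 ≤ t ∧
        e = (toV (Z + adjA A y), (∑ i, y i * b i) - t)} with hCdef
    have hCconv : Convex ℝ C := by
      rintro e1 ⟨y1, Z1, t1, hZ1, ht1, rfl⟩ e2 ⟨y2, Z2, t2, hZ2, ht2, rfl⟩ a c ha hc hac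
      refine ⟨a • y1 + c • y2, a • Z1 + c • Z2, a * t1 + c * t2,
        posSemidef_add (posSemidef_smul hZ1 ha) (posSemidef_smul hZ2 hc),
        by positivity, ?_⟩
      have hmat : (a • Z1 + c • Z2) + adjA A (a • y1 + c • y2)
          = a • (Z1 + adjA A y1) + c • (Z2 + adjA A y2) := by
        rw [adjA_add, adjA_smul, adjA_smul, smul_add, smul_add]
        abel
      rw [Prod.ext_iff]
      constructor
      · rw [hmat]
        simp only [Prod.smul_fst, Prod.fst_add]
        funext q
        simp only [toV, Pi.add_apply, Pi.smul_apply, Matrix.add_apply, Matrix.smul_apply,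
          smul_eq_mul]
      · simp only [Prod.snd_add, Prod.smul_snd, smul_eq_mul]
        rw [Finset.sum_congr rfl (fun i _ => by
          rw [Pi.add_apply, Pi.smul_apply, Pi.smul_apply, smul_eq_mul, smul_eq_mul, add_mul,
            mul_assoc, mul_assoc] :
          ∀ i ∈ Finset.univ, (a • y1 + c • y2) i * b i = a * (y1 i * b i) + c * (y2 i * b i))]
        rw [Finset.sum_add_distrib, ← Finset.mul_sum, ← Finset.mul_sum]
        ring
    have hCcone : ∀ e ∈ C, ∀ τ : ℝ, 0 ≤ τ → τ • e ∈ C := by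
      rintro e ⟨y, Z, t, hZ, ht, rfl⟩ τ hτ
      refine ⟨τ • y, τ • Z, τ * t, posSemidef_smul hZ hτ, by positivity, ?_⟩
      have hmat : (τ • Z) + adjA A (τ • y) = τ • (Z + adjA A y) := by
        rw [adjA_smul, smul_add]
      rw [Prod.ext_iff]
      constructor
      · simp only [Prod.smul_fst]
        rw [hmat, toV_smul]
      · simp only [Prod.smul_snd, smul_eq_mul]
        rw [Finset.sum_congr rfl (fun i _ => by
          rw [Pi.smul_apply, smul_eq_mul, mul_assoc] :
          ∀ i ∈ Finset.univ, (τ • y) i * b i = τ * (y i * b i))]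
        rw [← Finset.mul_sum]
        ring
    have hzeroC : ((0:(Fin n × Fin n → ℝ) × ℝ)) ∈ C := by
      refine ⟨0, 0, 0, ?_, le_refl 0, ?_⟩
      · rw [posSemidef_def]
        exact ⟨by unfold Matrix.IsSymm; simp, fun x => by simp⟩
      · have h0 : adjA A (0 : Fin m → ℝ) = 0 := by unfold adjA; simp
        rw [h0]
        simp only [add_zero, Pi.zero_apply, zero_mul, Finset.sum_const_zero, sub_zero]
        rw [Prod.ext_iff]
        exact ⟨rfl, rfl⟩
    -- key claim: the point (toV Lam, ⟨Lam, Xb⟩) lies in the closure of C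
    have hclosure : ((toV Lam, tdot Lam Xb) : (Fin n × Fin n → ℝ) × ℝ) ∈ closure C := by
      by_contra hnot
      obtain ⟨f, u0, hfu, hux⟩ :=
        geometric_hahn_banach_closed_point (hCconv.closure) isClosed_closure hnot
      have hfC : ∀ e ∈ C, f e < u0 := fun e he => hfu e (subset_closure he)
      have hu0pos : 0 < u0 := by
        have := hfC 0 hzeroC
        simpa using this
      -- f is nonpositive on the cone C
      have hfle : ∀ e ∈ C, f e ≤ 0 := by
        intro e he
        by_contra hpos
        push_neg at hpos
        have hτ : 0 ≤ (u0 / f e) := le_of_lt (div_pos hu0pos hpos)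
        have := hfC _ (hCcone e he (u0 / f e) hτ)
        rw [_root_.map_smul, smul_eq_mul, div_mul_cancel₀ _ (ne_of_gt hpos)] at this
        exact lt_irrefl u0 this
      -- decompose f
      set s : ℝ := f (0, 1) with hsdef
      set fL : (Fin n × Fin n → ℝ) →L[ℝ] ℝ :=
        f.comp (ContinuousLinearMap.inl ℝ (Fin n × Fin n → ℝ) ℝ) with hfLdef
      have hfL : ∀ v : Fin n × Fin n → ℝ, fL v = f (v, 0) := by
        intro v
        simp [hfLdef]
      set ℓ : Matrix (Fin n) (Fin n) ℝ → ℝ := fun M => fL (toV M) with hldef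
      have hfdec : ∀ (M : Matrix (Fin n) (Fin n) ℝ) (r : ℝ),
          f (toV M, r) = ℓ M + r * s := by
        intro M r
        have h1 : ((toV M, r) : (Fin n × Fin n → ℝ) × ℝ) = (toV M, 0) + r • (0, 1) := by
          rw [Prod.ext_iff]
          constructor
          · simp
          · simp
        rw [h1, map_add, _root_.map_smul, smul_eq_mul, ← hfL (toV M)]
      -- elementary facts about ℓ
      have hl0 : ℓ 0 = 0 := by
        have h0 : toV (0 : Matrix (Fin n) (Fin n) ℝ) = 0 := rfl
        simp only [hldef, h0]
        exact map_zero fL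
      -- representation of ℓ via the matrix G
      set G : Matrix (Fin n) (Fin n) ℝ := fun i j => fL (Pi.single (i, j) 1) with hGdef
      have hlrep : ∀ M, ℓ M = tdot G M := by
        intro M
        simp only [hldef]
        rw [pi_eq_sum_single (toV M), map_sum]
        rw [← sum_toV_mul G M]
        refine Finset.sum_congr rfl fun p _ => ?_
        rw [_root_.map_smul, smul_eq_mul]
        rw [mul_comm]
        congr 1
      -- facts from membership in C
      have hs_nonneg : 0 ≤ s := by
        have h1 : ((toV ((0:Matrix (Fin n) (Fin n) ℝ) + adjA A 0),
            (∑ i, (0:Fin m → ℝ) i * b i) - 1) : (Fin n × Fin n → ℝ) × ℝ) ∈ C :=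
          ⟨0, 0, 1, by
            rw [posSemidef_def]
            exact ⟨by unfold Matrix.IsSymm; simp, fun x => by simp⟩, zero_le_one, rfl⟩
        have h2 := hfle _ h1
        have h0 : adjA A (0 : Fin m → ℝ) = 0 := by unfold adjA; simp
        rw [h0, add_zero] at h2
        simp only [Pi.zero_apply, zero_mul, Finset.sum_const_zero, zero_sub] at h2
        rw [hfdec 0 (-1), hl0] at h2
        linarith
      have hy_eq : ∀ y : Fin m → ℝ, ℓ (adjA A y) + (∑ i, y i * b i) * s = 0 := by
        intro y
        have hmem : ∀ y' : Fin m → ℝ, ℓ (adjA A y') + (∑ i, y' i * b i) * s ≤ 0 := by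
          intro y'
          have h1 : ((toV ((0:Matrix (Fin n) (Fin n) ℝ) + adjA A y'),
              (∑ i, y' i * b i) - 0) : (Fin n × Fin n → ℝ) × ℝ) ∈ C :=
            ⟨y', 0, 0, by
              rw [posSemidef_def]
              exact ⟨by unfold Matrix.IsSymm; simp, fun x => by simp⟩, le_refl 0, rfl⟩
          have h2 := hfle _ h1
          rw [zero_add, sub_zero, hfdec] at h2
          exact h2
        have hpos := hmem y
        have hneg := hmem (-y)
        have hadj : adjA A (-y) = -(adjA A y) := by
          have : (-y : Fin m → ℝ) = (-1 : ℝ) • y := by funext i; simp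
          rw [this, adjA_smul]
          simp
        rw [hadj] at hneg
        have hlneg : ℓ (-(adjA A y)) = -ℓ (adjA A y) := by
          rw [hlrep, hlrep]
          have : -(adjA A y) = (-1 : ℝ) • (adjA A y) := by simp
          rw [this, tdot_smul_right]
          ring
        rw [hlneg] at hneg
        have hsum_neg : (∑ i, (-y) i * b i) = -(∑ i, y i * b i) := by
          rw [← Finset.sum_neg_distrib]
          refine Finset.sum_congr rfl fun i _ => ?_
          simp [neg_mul]
        rw [hsum_neg] at hneg
        linarith
      have hZ_le : ∀ Z : Matrix (Fin n) (Fin n) ℝ, Z.PosSemidef → ℓ Z ≤ 0 := by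
        intro Z hZ
        have h1 : ((toV (Z + adjA A 0),
            (∑ i, (0:Fin m → ℝ) i * b i) - 0) : (Fin n × Fin n → ℝ) × ℝ) ∈ C :=
          ⟨0, Z, 0, hZ, le_refl 0, rfl⟩
        have h2 := hfle _ h1
        have h0 : adjA A (0 : Fin m → ℝ) = 0 := by unfold adjA; simp
        rw [h0, add_zero, sub_zero] at h2
        simp only [Pi.zero_apply, zero_mul, Finset.sum_const_zero] at h2
        rw [hfdec] at h2
        linarith
      -- strict separation at the target point
      have hstrict : 0 < ℓ Lam + tdot Lam Xb * s := by
        have := hux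
        rw [hfdec Lam (tdot Lam Xb)] at this
        linarith
      -- symmetrized representation matrix
      set H : Matrix (Fin n) (Fin n) ℝ := (1/2 : ℝ) • (G + Gᵀ) with hHdef
      have hHsymm : H.IsSymm := by
        unfold Matrix.IsSymm
        rw [hHdef, transpose_smul, transpose_add, transpose_transpose, add_comm]
      have htdotH : ∀ M : Matrix (Fin n) (Fin n) ℝ, M.IsSymm → tdot G M = tdot H M := by
        intro M hM
        rw [hHdef, tdot_smul_left, tdot_add_left]
        have : tdot Gᵀ M = tdot G M := by
          unfold tdot
          rw [Finset.sum_comm]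
          refine Finset.sum_congr rfl fun i _ => Finset.sum_congr rfl fun j _ => ?_
          have hM2 : M j i = M i j := by
            calc M j i = Mᵀ i j := rfl
            _ = M i j := by rw [hM]
          rw [transpose_apply, hM2]
        rw [this]
        ring
      -- -H is PSD
      have hHneg : (-H).PosSemidef := by
        rw [posSemidef_def]
        constructor
        · unfold Matrix.IsSymm at *
          rw [transpose_neg, hHsymm]
        · intro x
          have h1 := hZ_le (vecMulVec x x) (posSemidef_vecMulVec x)
          rw [hlrep, htdotH _ (isSymm_of_posSemidef (posSemidef_vecMulVec x))] at h1
          rw [tdot_vecMulVec] at h1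
          have : x ⬝ᵥ ((-H) *ᵥ x) = -(x ⬝ᵥ (H *ᵥ x)) := by
            rw [neg_mulVec, dotProduct_neg]
          rw [this]
          linarith
      -- trace identities for A i against H
      have hAiH : ∀ i, tdot (A i) H = ℓ (A i) := by
        intro i
        rw [hlrep, htdotH _ (hA i), tdot_comm]
      have hadj_single : ∀ i : Fin m, adjA A (Pi.single i 1) = A i := by
        intro i
        unfold adjA
        rw [Finset.sum_eq_single i]
        · simp
        · intro j _ hji
          rw [Pi.single_apply]
          simp [hji]
        · intro h; exact absurd (Finset.mem_univ i) h
      have hlAi : ∀ i, ℓ (A i) + b i * s = 0 := by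
        intro i
        have := hy_eq (Pi.single i 1)
        rw [hadj_single i] at this
        have hsum : (∑ j, (Pi.single i 1 : Fin m → ℝ) j * b j) = b i := by
          rw [Finset.sum_eq_single i]
          · simp
          · intro j _ hji
            rw [Pi.single_apply]
            simp [hji]
          · intro h; exact absurd (Finset.mem_univ i) h
        rw [hsum] at this
        exact this
      have hlLam : ℓ Lam = tdot Lam H := by
        rw [hlrep, htdotH _ hLamSymm, tdot_comm]
      by_cases hs : s = 0
      · -- case s = 0 : unbounded direction
        set N := -H with hNdef
        have hNpsd : N.PosSemidef := hHneg
        have hcalAN : calA A N = 0 := by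
          funext i
          rw [calA_eq_tdot hA]
          have h1 := hlAi i
          rw [hs, mul_zero, add_zero] at h1
          rw [hNdef]
          have : tdot (A i) (-H) = -(tdot (A i) H) := by
            have : (-H) = (-1 : ℝ) • H := by simp
            rw [this, tdot_smul_right]; ring
          rw [this, hAiH i, h1, neg_zero]
          rfl
        have hLamN : tdot Lam N < 0 := by
          have : tdot Lam N = -(tdot Lam H) := by
            rw [hNdef]
            have : (-H) = (-1 : ℝ) • H := by simp
            rw [this, tdot_smul_right]; ring
          rw [this, ← hlLam]
          rw [hs, mul_zero, add_zero] at hstrict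
          linarith
        obtain ⟨X0, hX0⟩ := hFne
        have hray : ∀ τ : ℝ, 0 ≤ τ → X0 + τ • N ∈ spectra A b := by
          intro τ hτ
          constructor
          · exact posSemidef_add hX0.1 (posSemidef_smul hNpsd hτ)
          · rw [calA_add, calA_smul, hX0.2, hcalAN]
            simp
        have hVIray : ∀ τ : ℝ, 0 ≤ τ →
            0 ≤ tdot Lam (X0 - Xb) + τ * tdot Lam N := by
          intro τ hτ
          have := hVI _ (hray τ hτ)
          have hexp : X0 + τ • N - Xb = (X0 - Xb) + τ • N := by abel
          rw [hexp, tdot_add_right, tdot_smul_right] at this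
          linarith
        set τ0 := (tdot Lam (X0 - Xb) + 1) / (-(tdot Lam N)) with hτ0
        have hτ0pos : 0 ≤ τ0 := by
          apply div_nonneg
          · have h := hVIray 0 (le_refl 0)
            simp at h
            linarith
          · linarith
        have := hVIray τ0 hτ0pos
        rw [hτ0] at this
        rw [div_mul_eq_mul_div, mul_comm] at this
        have hne : -(tdot Lam N) ≠ 0 := by linarith
        rw [show tdot Lam N * (tdot Lam (X0 - Xb) + 1) / (-(tdot Lam N))
            = -(tdot Lam (X0 - Xb) + 1) by
              rw [mul_div_right_comm, div_neg, div_self (neg_ne_zero.mp hne)]; ring] at this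
        linarith
      · -- case s > 0 : construct a feasible point beating Xb
        have hspos : 0 < s := lt_of_le_of_ne hs_nonneg (Ne.symm hs)
        set X0 := (-(1/s)) • H with hX0def
        have hX0psd : X0.PosSemidef := by
          have hX0' : X0 = (1/s) • (-H) := by
            rw [hX0def, neg_smul, smul_neg]
          rw [hX0']
          exact posSemidef_smul hHneg (by positivity)
        have hX0feas : calA A X0 = b := by
          funext i
          rw [calA_eq_tdot hA, hX0def, tdot_smul_right, hAiH i]
          have h1 := hlAi i
          have : ℓ (A i) = -(b i) * s := by linarith
          rw [this]
          field_simp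
        have hX0mem : X0 ∈ spectra A b := ⟨hX0psd, hX0feas⟩
        have hVIX0 := hVI _ hX0mem
        rw [tdot_sub_right] at hVIX0
        have hLamX0 : tdot Lam X0 = -(1/s) * tdot Lam H := by
          rw [hX0def, tdot_smul_right]
        have : ℓ Lam = -(s * tdot Lam X0) := by
          rw [hlLam, hLamX0]
          field_simp
        rw [this] at hstrict
        nlinarith
    -- now use continuity of Ψ to conclude
    set Psi : ((Fin n × Fin n → ℝ) × ℝ) → ℝ :=
      fun e => e.2 - (1/2) * (∑ p : Fin n × Fin n, e.1 p * e.1 p)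
        - ∑ p : Fin n × Fin n, e.1 p * W p.1 p.2 with hPsidef
    have hPsiCont : Continuous Psi := by
      apply Continuous.sub
      apply Continuous.sub
      · exact continuous_snd
      · apply Continuous.mul continuous_const
        apply continuous_finset_sum
        intro p _
        exact ((continuous_apply p).comp continuous_fst).mul
          ((continuous_apply p).comp continuous_fst)
      · apply continuous_finset_sum
        intro p _
        exact (((continuous_apply p).comp continuous_fst).mul continuous_const)
    have hPsiC : ∀ e ∈ C, Psi e ≤ u := by
      rintro e ⟨y, Z, t, hZ, ht, rfl⟩
      set S := Z + adjA A y with hSdef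
      have hfst : ∑ p : Fin n × Fin n, toV S p * toV S p = tdot S S := sum_toV_mul S S
      have hsnd : ∑ p : Fin n × Fin n, toV S p * W p.1 p.2 = tdot S W := by
        rw [← sum_toV_mul S W]
        rfl
      have hPsival : Psi (toV S, (∑ i, y i * b i) - t)
          = (∑ i, y i * b i) - t - (1/2) * tdot S S - tdot S W := by
        simp only [hPsidef]
        rw [hfst, hsnd]
      rw [hPsival]
      have hphi : dualPhi A b W y Z = (∑ i, y i * b i) - (1/2) * tdot S S - tdot S W := by
        unfold dualPhi
        rw [frobSq_eq_tdot, trace_mul_symm_eq_tdot (isSymm_of_posSemidef hZ)]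
        have hsplit : ∀ i, y i * (b i - calA A W i) = y i * b i - y i * tdot (A i) W := by
          intro i
          rw [calA_eq_tdot hA]
          ring
        rw [Finset.sum_congr rfl (fun i _ => hsplit i), Finset.sum_sub_distrib]
        have hSW : tdot S W = tdot Z W + ∑ i, y i * tdot (A i) W := by
          rw [hSdef, tdot_add_left, tdot_adjA]
        rw [hSW]
        ring
      have hphile : dualPhi A b W y Z ≤ u := hu ⟨y, Z, hZ, rfl⟩
      rw [hphi] at hphile
      linarith
    have hclosed : ∀ e ∈ closure C, Psi e ≤ u := by
      have hsub : closure C ⊆ {e | Psi e ≤ u} :=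
        closure_minimal hPsiC (isClosed_le hPsiCont continuous_const)
      exact fun e he => hsub he
    have hfinal := hclosed _ hclosure
    have hval : Psi (toV Lam, tdot Lam Xb)
        = tdot Lam Xb - (1/2) * tdot Lam Lam - tdot Lam W := by
      simp only [hPsidef]
      rw [sum_toV_mul Lam Lam]
      have : ∑ p : Fin n × Fin n, toV Lam p * W p.1 p.2 = tdot Lam W := by
        rw [← sum_toV_mul Lam W]
        rfl
      rw [this]
    rw [hval] at hfinal
    have hLamLam : tdot Lam Xb - tdot Lam W = tdot Lam Lam := by
      rw [← tdot_sub_right, ← hLamdef]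
    rw [hpeq, frobSq_eq_tdot]
    linarith
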